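/- Let (X,φ) be a Smale space with constants ε_X and λ_X, and let m,n ∈ ℤ satisfy m·n > 0 and λ_X^{|m|} + λ_X^{|n|} < 1. Then: (i) if (x,y) ∈ G_φ^{s,n} and (y,z) ∈ G_φ^{s,m}, then (x,z) ∈ G_φ^{s,0} when n,m < 0, and (x,z) ∈ G_φ^{s,n+m} when n,m > 0; (ii) if (x,y) ∈ G_φ^{u,n} and (y,z) ∈ G_φ^{u,m}, then (x,z) ∈ G_φ^{u,0} when n,m < 0, and (x,z) ∈ G_φ^{u,n+m} when n,m > 0. -/
import Mathlib


open Filter Set Topology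

noncomputable section

/-- Integer iterate of a homeomorphism. -/
def hIter {X : Type*} [TopologicalSpace X] (φ : X ≃ₜ X) (n : ℤ) (x : X) : X :=
  ((φ.toEquiv : Equiv.Perm X) ^ n) x

/-- The cocycle sums `f^n` of a function `f : X → ℤ` along the iterates of `φ`:
`f^n(x) = Σ_{i=0}^{n-1} f(φ^i(x))` for `n > 0`, `f^0 = 0`, and
`f^n(x) = −Σ_{i=n}^{-1} f(φ^i(x))` for `n < 0`. -/
def cSum {X : Type*} [TopologicalSpace X] (φ : X ≃ₜ X) (f : X → ℤ) (n : ℤ) (x : X) : ℤ :=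
  if 0 ≤ n then ∑ i ∈ Finset.range n.toNat, f (hIter φ i x)
  else -∑ i ∈ Finset.range (-n).toNat, f (hIter φ (n + i) x)

/-- Stable asymptotic pairs (limit definition). -/
def asympS {X : Type*} [MetricSpace X] (φ : X ≃ₜ X) : Set (X × X) :=
  {p | Tendsto (fun n : ℕ => dist (hIter φ n p.1) (hIter φ n p.2)) atTop (nhds 0)}

/-- Unstable asymptotic pairs (limit definition). -/
def asympU {X : Type*} [MetricSpace X] (φ : X ≃ₜ X) : Set (X × X) :=
  {p | Tendsto (fun n : ℕ => dist (hIter φ (-(n : ℤ)) p.1) (hIter φ (-(n : ℤ)) p.2))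
    atTop (nhds 0)}

/-- Asymptotic pairs (limit definition). -/
def asympA {X : Type*} [MetricSpace X] (φ : X ≃ₜ X) : Set (X × X) := asympS φ ∩ asympU φ

/-- The `ω`-limit set of `x`. -/
def omegaSet {X : Type*} [MetricSpace X] (φ : X ≃ₜ X) (x : X) : Set X :=
  {z | ∃ n : ℕ → ℕ, StrictMono n ∧ Tendsto (fun i => hIter φ (n i) x) atTop (nhds z)}

/-- The `α`-limit set of `x`. -/
def alphaSet {X : Type*} [MetricSpace X] (φ : X ≃ₜ X) (x : X) : Set X :=
  {z | ∃ n : ℕ → ℤ, StrictAnti n ∧ Tendsto (fun i => hIter φ (n i) x) atTop (nhds z)}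

/-- A Smale space structure on a compact metric space `X`. -/
structure SmaleSpace (X : Type*) [MetricSpace X] [CompactSpace X] where
  phi : X ≃ₜ X
  eps : ℝ
  lam : ℝ
  br : X → X → X
  eps_pos : 0 < eps
  lam_pos : 0 < lam
  lam_lt_one : lam < 1
  br_cont : ContinuousOn (fun p : X × X => br p.1 p.2) {p : X × X | dist p.1 p.2 < eps}
  br_self : ∀ x : X, br x x = x
  br_assoc_left : ∀ x y z : X, dist x y < eps → dist (br x y) z < eps → dist x z < eps →
    br (br x y) z = br x z
  br_assoc_right : ∀ x y z : X, dist y z < eps → dist x (br y z) < eps → dist x z < eps →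
    br x (br y z) = br x z
  phi_br : ∀ x y : X, dist x y < eps → dist (phi x) (phi y) < eps →
    phi (br x y) = br (phi x) (phi y)
  contract_s : ∀ x y z : X, br y x = y → dist x y < eps → br z x = z → dist x z < eps →
    dist (phi y) (phi z) ≤ lam * dist y z
  contract_u : ∀ x y z : X, br x y = y → dist x y < eps → br x z = z → dist x z < eps →
    dist (phi.symm y) (phi.symm z) ≤ lam * dist y z

namespace SmaleSpace

variable {X Y : Type*} [MetricSpace X] [CompactSpace X] [MetricSpace Y] [CompactSpace Y]

/-- Local stable set `X^s(x,ε)`. -/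
def Xs (S : SmaleSpace X) (x : X) (ε : ℝ) : Set X := {y | S.br y x = y ∧ dist x y < ε}

/-- Local unstable set `X^u(x,ε)`. -/
def Xu (S : SmaleSpace X) (x : X) (ε : ℝ) : Set X := {y | S.br x y = y ∧ dist x y < ε}

def Gs0 (S : SmaleSpace X) : Set (X × X) := {p | p.2 ∈ S.Xs p.1 S.eps}

def Gu0 (S : SmaleSpace X) : Set (X × X) := {p | p.2 ∈ S.Xu p.1 S.eps}

/-- `G_φ^{s,n} = (φ×φ)^{-n}(G_φ^{s,0})`. -/
def GsN (S : SmaleSpace X) (n : ℤ) : Set (X × X) :=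
  {p | (hIter S.phi n p.1, hIter S.phi n p.2) ∈ S.Gs0}

/-- `G_φ^{u,n} = (φ×φ)^{n}(G_φ^{u,0})`. -/
def GuN (S : SmaleSpace X) (n : ℤ) : Set (X × X) :=
  {p | (hIter S.phi (-n) p.1, hIter S.phi (-n) p.2) ∈ S.Gu0}

def GaN (S : SmaleSpace X) (n : ℤ) : Set (X × X) := S.GsN n ∩ S.GuN n

/-- The asymptotic equivalence relation `G_φ^a = ⋃_{n ≥ 0} G_φ^{a,n}`. -/
def Ga (S : SmaleSpace X) : Set (X × X) := ⋃ n : ℕ, S.GaN n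

lemma gaN_subset_ga (S : SmaleSpace X) (n : ℕ) : S.GaN n ⊆ S.Ga :=
  Set.subset_iUnion (fun k : ℕ => S.GaN k) n

/-- The inductive limit topology on `G_φ^a`: a set is open iff its intersection with each
`G_φ^{a,n}` is open in the subspace topology from `X × X`. -/
def gaTopology (S : SmaleSpace X) : TopologicalSpace ↥S.Ga :=
  ⨆ n : ℕ, TopologicalSpace.coinduced (Set.inclusion (S.gaN_subset_ga n)) inferInstance

/-- Irreducibility of a Smale space. -/
def Irreducible (S : SmaleSpace X) : Prop :=
  ∀ U V : Set X, IsOpen U → U.Nonempty → IsOpen V → V.Nonempty →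
    ∃ K : ℕ, ((hIter S.phi K '' U) ∩ V).Nonempty

def IsPeriodicPoint (S : SmaleSpace X) (x : X) : Prop :=
  ∃ p : ℕ, 0 < p ∧ hIter S.phi p x = x

/-- `h` is a flip conjugacy between `(X,φ)` and `(Y,ψ)`. -/
def IsFlipConjugacy (S : SmaleSpace X) (T : SmaleSpace Y) (h : X ≃ₜ Y) : Prop :=
  (∀ x, h (S.phi x) = T.phi (h x)) ∨ (∀ x, h (S.phi x) = T.phi.symm (h x))

def FlipConjugate (S : SmaleSpace X) (T : SmaleSpace Y) : Prop :=
  ∃ h : X ≃ₜ Y, IsFlipConjugacy S T h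

/-- An isomorphism of the principal étale groupoids `G_φ^a` and `G_ψ^a`:
a bijection which is a homeomorphism for the inductive limit topologies and preserves
the (equivalence relation) groupoid structure. -/
structure GaIso (S : SmaleSpace X) (T : SmaleSpace Y) where
  toEquiv : ↥S.Ga ≃ ↥T.Ga
  cont : @Continuous _ _ S.gaTopology T.gaTopology toEquiv
  cont_symm : @Continuous _ _ T.gaTopology S.gaTopology toEquiv.symm
  map_mul : ∀ p q r : ↥S.Ga, (p : X × X).2 = (q : X × X).1 →
    (r : X × X) = ((p : X × X).1, (q : X × X).2) →
    (toEquiv p : Y × Y).2 = (toEquiv q : Y × Y).1 ∧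
      (toEquiv r : Y × Y) = ((toEquiv p : Y × Y).1, (toEquiv q : Y × Y).2)

end SmaleSpace

section Aux

lemma hIter_add' {X : Type*} [TopologicalSpace X] (φ : X ≃ₜ X) (a b : ℤ) (x : X) :
    hIter φ (a + b) x = hIter φ a (hIter φ b x) := by
  simp [hIter, zpow_add, Equiv.Perm.mul_apply]

lemma hIter_zero' {X : Type*} [TopologicalSpace X] (φ : X ≃ₜ X) (x : X) :
    hIter φ 0 x = x := rfl

lemma hIter_one' {X : Type*} [TopologicalSpace X] (φ : X ≃ₜ X) (x : X) :
    hIter φ 1 x = φ x := rfl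

lemma hIter_neg_one' {X : Type*} [TopologicalSpace X] (φ : X ≃ₜ X) (x : X) :
    hIter φ (-1) x = φ.symm x := rfl

namespace SmaleSpace

variable {X : Type*} [MetricSpace X] [CompactSpace X] (S : SmaleSpace X)

/-- One forward step of a local stable pair. -/
lemma stable_step {a b : X} (h1 : S.br b a = b) (h2 : dist a b < S.eps) :
    S.br (S.phi b) (S.phi a) = S.phi b ∧ dist (S.phi a) (S.phi b) ≤ S.lam * dist a b := by
  have hba : dist b a < S.eps := by rwa [dist_comm]
  have hc : dist (S.phi b) (S.phi a) ≤ S.lam * dist b a := by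
    have := S.contract_s a b a h1 h2 (by rw [S.br_self]) (by simpa using S.eps_pos)
    simpa using this
  have hlt : dist (S.phi b) (S.phi a) < S.eps := by
    calc dist (S.phi b) (S.phi a) ≤ S.lam * dist b a := hc
    _ ≤ 1 * dist b a := by
        apply mul_le_mul_of_nonneg_right (le_of_lt S.lam_lt_one) dist_nonneg
    _ < S.eps := by simpa using hba
  have hbr := S.phi_br b a hba hlt
  rw [h1] at hbr
  refine ⟨hbr.symm, ?_⟩
  rw [dist_comm a, dist_comm (S.phi a)]
  exact hc

/-- Forward iterates of a local stable pair. -/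
lemma stable_iter {a b : X} (h1 : S.br b a = b) (h2 : dist a b < S.eps) (k : ℕ) :
    S.br (hIter S.phi k b) (hIter S.phi k a) = hIter S.phi k b ∧
      dist (hIter S.phi k a) (hIter S.phi k b) ≤ S.lam ^ k * dist a b := by
  induction k with
  | zero => exact ⟨by simpa [hIter_zero'] using h1, by simp [hIter_zero']⟩
  | succ k ih =>
    obtain ⟨ih1, ih2⟩ := ih
    have hdk : dist (hIter S.phi k a) (hIter S.phi k b) < S.eps := by
      calc dist (hIter S.phi k a) (hIter S.phi k b) ≤ S.lam ^ k * dist a b := ih2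
      _ ≤ 1 * dist a b := by
          apply mul_le_mul_of_nonneg_right _ dist_nonneg
          exact pow_le_one₀ S.lam_pos.le S.lam_lt_one.le
      _ < S.eps := by simpa using h2
    obtain ⟨s1, s2⟩ := S.stable_step ih1 hdk
    have he : ∀ w : X, hIter S.phi (k + 1 : ℕ) w = S.phi (hIter S.phi k w) := by
      intro w
      have : ((k + 1 : ℕ) : ℤ) = 1 + (k : ℤ) := by push_cast; ring
      rw [this, hIter_add', hIter_one']
    rw [he, he]
    refine ⟨s1, s2.trans ?_⟩
    calc S.lam * dist (hIter S.phi k a) (hIter S.phi k b)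
        ≤ S.lam * (S.lam ^ k * dist a b) :=
          mul_le_mul_of_nonneg_left ih2 S.lam_pos.le
      _ = S.lam ^ (k + 1) * dist a b := by ring

/-- One backward step of a local unstable pair. -/
lemma unstable_step {a b : X} (h1 : S.br a b = b) (h2 : dist a b < S.eps) :
    S.br (S.phi.symm a) (S.phi.symm b) = S.phi.symm b ∧
      dist (S.phi.symm a) (S.phi.symm b) ≤ S.lam * dist a b := by
  have hc : dist (S.phi.symm b) (S.phi.symm a) ≤ S.lam * dist b a := by
    have := S.contract_u a b a h1 h2 (by rw [S.br_self]) (by simpa using S.eps_pos)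
    simpa [dist_comm] using this
  have hc' : dist (S.phi.symm a) (S.phi.symm b) ≤ S.lam * dist a b := by
    rw [dist_comm, dist_comm a b]; exact hc
  have hlt : dist (S.phi.symm a) (S.phi.symm b) < S.eps := by
    calc dist (S.phi.symm a) (S.phi.symm b) ≤ S.lam * dist a b := hc'
    _ ≤ 1 * dist a b := mul_le_mul_of_nonneg_right (le_of_lt S.lam_lt_one) dist_nonneg
    _ < S.eps := by simpa using h2
  have hbr := S.phi_br (S.phi.symm a) (S.phi.symm b) hlt (by simpa using h2)
  simp only [Homeomorph.apply_symm_apply] at hbr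
  refine ⟨?_, hc'⟩
  have := congrArg S.phi.symm hbr
  simp only [Homeomorph.symm_apply_apply] at this
  rw [this, h1]

/-- Backward iterates of a local unstable pair. -/
lemma unstable_iter {a b : X} (h1 : S.br a b = b) (h2 : dist a b < S.eps) (k : ℕ) :
    S.br (hIter S.phi (-(k : ℤ)) a) (hIter S.phi (-(k : ℤ)) b) = hIter S.phi (-(k : ℤ)) b ∧
      dist (hIter S.phi (-(k : ℤ)) a) (hIter S.phi (-(k : ℤ)) b) ≤ S.lam ^ k * dist a b := by
  induction k with
  | zero => exact ⟨by simpa [hIter_zero'] using h1, by simp [hIter_zero']⟩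
  | succ k ih =>
    obtain ⟨ih1, ih2⟩ := ih
    have hdk : dist (hIter S.phi (-(k : ℤ)) a) (hIter S.phi (-(k : ℤ)) b) < S.eps := by
      calc dist (hIter S.phi (-(k : ℤ)) a) (hIter S.phi (-(k : ℤ)) b)
          ≤ S.lam ^ k * dist a b := ih2
        _ ≤ 1 * dist a b := mul_le_mul_of_nonneg_right
            (pow_le_one₀ S.lam_pos.le S.lam_lt_one.le) dist_nonneg
        _ < S.eps := by simpa using h2
    obtain ⟨s1, s2⟩ := S.unstable_step ih1 hdk
    have he : ∀ w : X, hIter S.phi (-((k + 1 : ℕ) : ℤ)) w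
        = S.phi.symm (hIter S.phi (-(k : ℤ)) w) := by
      intro w
      have : (-((k + 1 : ℕ) : ℤ)) = -1 + -(k : ℤ) := by push_cast; ring
      rw [this, hIter_add', hIter_neg_one']
    rw [he, he]
    refine ⟨s1, s2.trans ?_⟩
    calc S.lam * dist (hIter S.phi (-(k : ℤ)) a) (hIter S.phi (-(k : ℤ)) b)
        ≤ S.lam * (S.lam ^ k * dist a b) := mul_le_mul_of_nonneg_left ih2 S.lam_pos.le
      _ = S.lam ^ (k + 1) * dist a b := by ring

/-- Transitivity of bracketed stable pairs. -/
lemma br_trans_s {a b c : X} (hba : S.br b a = b) (hcb : S.br c b = c)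
    (d1 : dist a b < S.eps) (d2 : dist b c < S.eps) (d3 : dist a c < S.eps) :
    S.br c a = c := by
  have := S.br_assoc_right c b a (by rwa [dist_comm]) (by rwa [hba, dist_comm])
    (by rwa [dist_comm])
  rw [hba, hcb] at this
  exact this.symm

/-- Transitivity of bracketed unstable pairs. -/
lemma br_trans_u {a b c : X} (hab : S.br a b = b) (hbc : S.br b c = c)
    (d1 : dist a b < S.eps) (d2 : dist b c < S.eps) (d3 : dist a c < S.eps) :
    S.br a c = c := by
  have := S.br_assoc_left a b c d1 (by rwa [hab]) d3
  rw [hab, hbc] at this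
  exact this.symm

end SmaleSpace

end Aux


/-- Let `m, n ∈ ℤ` with `m·n > 0` and `λ_X^{|m|} + λ_X^{|n|} < 1`. Then
composing `G_φ^{s,n}` with `G_φ^{s,m}` lands in `G_φ^{s,0}` (if `n,m < 0`) or in
`G_φ^{s,n+m}` (if `n,m > 0`), and similarly for the unstable sets. -/
theorem gsN_guN_comp {X : Type*} [MetricSpace X] [CompactSpace X] (S : SmaleSpace X)
    (m n : ℤ) (hmn : 0 < m * n)
    (hlam : S.lam ^ m.natAbs + S.lam ^ n.natAbs < 1) (x y z : X) :
    ((x, y) ∈ S.GsN n → (y, z) ∈ S.GsN m →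
      ((n < 0 → m < 0 → (x, z) ∈ S.GsN 0) ∧
       (0 < n → 0 < m → (x, z) ∈ S.GsN (n + m)))) ∧
    ((x, y) ∈ S.GuN n → (y, z) ∈ S.GuN m →
      ((n < 0 → m < 0 → (x, z) ∈ S.GuN 0) ∧
       (0 < n → 0 < m → (x, z) ∈ S.GuN (n + m)))) := by
  have hp : (0:ℝ) < S.lam ^ m.natAbs := pow_pos S.lam_pos _
  have hq : (0:ℝ) < S.lam ^ n.natAbs := pow_pos S.lam_pos _
  -- combining distance estimates
  have key : ∀ a b c : X, dist a b < S.lam ^ n.natAbs * S.eps →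
      dist b c < S.lam ^ m.natAbs * S.eps →
      dist a b < S.eps ∧ dist b c < S.eps ∧ dist a c < S.eps := by
    intro a b c e1 e2
    have h1 : S.lam ^ n.natAbs * S.eps ≤ 1 * S.eps :=
      mul_le_mul_of_nonneg_right (by nlinarith) S.eps_pos.le
    have h2 : S.lam ^ m.natAbs * S.eps ≤ 1 * S.eps :=
      mul_le_mul_of_nonneg_right (by nlinarith) S.eps_pos.le
    refine ⟨e1.trans_le (by linarith), e2.trans_le (by linarith), ?_⟩
    calc dist a c ≤ dist a b + dist b c := dist_triangle a b c
      _ < S.lam ^ n.natAbs * S.eps + S.lam ^ m.natAbs * S.eps := by linarith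
      _ = (S.lam ^ m.natAbs + S.lam ^ n.natAbs) * S.eps := by ring
      _ < 1 * S.eps := by
          exact mul_lt_mul_of_pos_right hlam S.eps_pos
      _ = S.eps := one_mul _
  constructor
  · -- stable case
    intro hxy hyz
    obtain ⟨hxy1, hxy2⟩ := hxy
    obtain ⟨hyz1, hyz2⟩ := hyz
    constructor
    · intro hn hm
      -- push both pairs to time 0
      obtain ⟨s1, s2⟩ := S.stable_iter hxy1 hxy2 n.natAbs
      obtain ⟨t1, t2⟩ := S.stable_iter hyz1 hyz2 m.natAbs
      have exn : ∀ w : X, hIter S.phi (n.natAbs : ℤ) (hIter S.phi n w) = w := by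
        intro w
        rw [← hIter_add', show (n.natAbs : ℤ) + n = 0 by omega, hIter_zero']
      have exm : ∀ w : X, hIter S.phi (m.natAbs : ℤ) (hIter S.phi m w) = w := by
        intro w
        rw [← hIter_add', show (m.natAbs : ℤ) + m = 0 by omega, hIter_zero']
      rw [exn, exn] at s1 s2
      rw [exm, exm] at t1 t2
      have e1 : dist x y < S.lam ^ n.natAbs * S.eps :=
        s2.trans_lt ((mul_lt_mul_iff_right₀ hq).mpr hxy2)
      have e2 : dist y z < S.lam ^ m.natAbs * S.eps :=
        t2.trans_lt ((mul_lt_mul_iff_right₀ hp).mpr hyz2)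
      obtain ⟨d1, d2, d3⟩ := key x y z e1 e2
      exact ⟨by simpa [hIter_zero'] using S.br_trans_s s1 t1 d1 d2 d3,
        by simpa [hIter_zero'] using d3⟩
    · intro hn hm
      -- push both pairs to time n + m
      obtain ⟨s1, s2⟩ := S.stable_iter hxy1 hxy2 m.natAbs
      obtain ⟨t1, t2⟩ := S.stable_iter hyz1 hyz2 n.natAbs
      have exn : ∀ w : X, hIter S.phi (m.natAbs : ℤ) (hIter S.phi n w)
          = hIter S.phi (n + m) w := by
        intro w
        rw [← hIter_add', show (m.natAbs : ℤ) + n = n + m by omega]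
      have exm : ∀ w : X, hIter S.phi (n.natAbs : ℤ) (hIter S.phi m w)
          = hIter S.phi (n + m) w := by
        intro w
        rw [← hIter_add', show (n.natAbs : ℤ) + m = n + m by omega]
      rw [exn, exn] at s1 s2
      rw [exm, exm] at t1 t2
      have e1 : dist (hIter S.phi (n + m) x) (hIter S.phi (n + m) y)
          < S.lam ^ m.natAbs * S.eps := s2.trans_lt ((mul_lt_mul_iff_right₀ hp).mpr hxy2)
      have e2 : dist (hIter S.phi (n + m) y) (hIter S.phi (n + m) z)
          < S.lam ^ n.natAbs * S.eps := t2.trans_lt ((mul_lt_mul_iff_right₀ hq).mpr hyz2)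
      have key' : dist (hIter S.phi (n + m) x) (hIter S.phi (n + m) y) < S.eps ∧
          dist (hIter S.phi (n + m) y) (hIter S.phi (n + m) z) < S.eps ∧
          dist (hIter S.phi (n + m) x) (hIter S.phi (n + m) z) < S.eps := by
        have h1 : S.lam ^ m.natAbs * S.eps ≤ 1 * S.eps :=
          mul_le_mul_of_nonneg_right (by nlinarith) S.eps_pos.le
        have h2 : S.lam ^ n.natAbs * S.eps ≤ 1 * S.eps :=
          mul_le_mul_of_nonneg_right (by nlinarith) S.eps_pos.le
        refine ⟨e1.trans_le (by linarith), e2.trans_le (by linarith), ?_⟩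
        calc dist (hIter S.phi (n + m) x) (hIter S.phi (n + m) z)
            ≤ dist (hIter S.phi (n + m) x) (hIter S.phi (n + m) y)
              + dist (hIter S.phi (n + m) y) (hIter S.phi (n + m) z) := dist_triangle _ _ _
          _ < S.lam ^ m.natAbs * S.eps + S.lam ^ n.natAbs * S.eps := by linarith
          _ = (S.lam ^ m.natAbs + S.lam ^ n.natAbs) * S.eps := by ring
          _ < 1 * S.eps := mul_lt_mul_of_pos_right hlam S.eps_pos
          _ = S.eps := one_mul _
      obtain ⟨d1, d2, d3⟩ := key'
      exact ⟨S.br_trans_s s1 t1 d1 d2 d3, d3⟩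
  · -- unstable case
    intro hxy hyz
    obtain ⟨hxy1, hxy2⟩ := hxy
    obtain ⟨hyz1, hyz2⟩ := hyz
    constructor
    · intro hn hm
      obtain ⟨s1, s2⟩ := S.unstable_iter hxy1 hxy2 n.natAbs
      obtain ⟨t1, t2⟩ := S.unstable_iter hyz1 hyz2 m.natAbs
      have exn : ∀ w : X, hIter S.phi (-(n.natAbs : ℤ)) (hIter S.phi (-n) w) = w := by
        intro w
        rw [← hIter_add', show -(n.natAbs : ℤ) + -n = 0 by omega, hIter_zero']
      have exm : ∀ w : X, hIter S.phi (-(m.natAbs : ℤ)) (hIter S.phi (-m) w) = w := by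
        intro w
        rw [← hIter_add', show -(m.natAbs : ℤ) + -m = 0 by omega, hIter_zero']
      rw [exn, exn] at s1 s2
      rw [exm, exm] at t1 t2
      have e1 : dist x y < S.lam ^ n.natAbs * S.eps :=
        s2.trans_lt ((mul_lt_mul_iff_right₀ hq).mpr hxy2)
      have e2 : dist y z < S.lam ^ m.natAbs * S.eps :=
        t2.trans_lt ((mul_lt_mul_iff_right₀ hp).mpr hyz2)
      obtain ⟨d1, d2, d3⟩ := key x y z e1 e2
      exact ⟨by simpa [hIter_zero'] using S.br_trans_u s1 t1 d1 d2 d3,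
        by simpa [hIter_zero'] using d3⟩
    · intro hn hm
      obtain ⟨s1, s2⟩ := S.unstable_iter hxy1 hxy2 m.natAbs
      obtain ⟨t1, t2⟩ := S.unstable_iter hyz1 hyz2 n.natAbs
      have exn : ∀ w : X, hIter S.phi (-(m.natAbs : ℤ)) (hIter S.phi (-n) w)
          = hIter S.phi (-(n + m)) w := by
        intro w
        rw [← hIter_add', show -(m.natAbs : ℤ) + -n = -(n + m) by omega]
      have exm : ∀ w : X, hIter S.phi (-(n.natAbs : ℤ)) (hIter S.phi (-m) w)
          = hIter S.phi (-(n + m)) w := by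
        intro w
        rw [← hIter_add', show -(n.natAbs : ℤ) + -m = -(n + m) by omega]
      rw [exn, exn] at s1 s2
      rw [exm, exm] at t1 t2
      have e1 : dist (hIter S.phi (-(n + m)) x) (hIter S.phi (-(n + m)) y)
          < S.lam ^ m.natAbs * S.eps := s2.trans_lt ((mul_lt_mul_iff_right₀ hp).mpr hxy2)
      have e2 : dist (hIter S.phi (-(n + m)) y) (hIter S.phi (-(n + m)) z)
          < S.lam ^ n.natAbs * S.eps := t2.trans_lt ((mul_lt_mul_iff_right₀ hq).mpr hyz2)
      have key' : dist (hIter S.phi (-(n + m)) x) (hIter S.phi (-(n + m)) y) < S.eps ∧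
          dist (hIter S.phi (-(n + m)) y) (hIter S.phi (-(n + m)) z) < S.eps ∧
          dist (hIter S.phi (-(n + m)) x) (hIter S.phi (-(n + m)) z) < S.eps := by
        have h1 : S.lam ^ m.natAbs * S.eps ≤ 1 * S.eps :=
          mul_le_mul_of_nonneg_right (by nlinarith) S.eps_pos.le
        have h2 : S.lam ^ n.natAbs * S.eps ≤ 1 * S.eps :=
          mul_le_mul_of_nonneg_right (by nlinarith) S.eps_pos.le
        refine ⟨e1.trans_le (by linarith), e2.trans_le (by linarith), ?_⟩
        calc dist (hIter S.phi (-(n + m)) x) (hIter S.phi (-(n + m)) z)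
            ≤ dist (hIter S.phi (-(n + m)) x) (hIter S.phi (-(n + m)) y)
              + dist (hIter S.phi (-(n + m)) y) (hIter S.phi (-(n + m)) z) :=
                dist_triangle _ _ _
          _ < S.lam ^ m.natAbs * S.eps + S.lam ^ n.natAbs * S.eps := by linarith
          _ = (S.lam ^ m.natAbs + S.lam ^ n.natAbs) * S.eps := by ring
          _ < 1 * S.eps := mul_lt_mul_of_pos_right hlam S.eps_pos
          _ = S.eps := one_mul _
      obtain ⟨d1, d2, d3⟩ := key'
      exact ⟨S.br_trans_u s1 t1 d1 d2 d3, d3⟩
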